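/- Let f : (0,1) → ℝ be measurable with ∫₀¹ s|f(s)| ds < ∞. Let g : [0,1) → ℝ be continuously differentiable on [0,1) and twice continuously differentiable on (0,1), and set v(x) = g(|x|) on B(0,1). Assume det∇²v(x) = f(|x|) for all x ∈ B(0,1) \ {0} and that ∫_{B(0,1)\{0}} |∇²v|² dx < ∞. Then g'(r)² = ∫₀^r 2s f(s) ds for every r ∈ (0,1). In particular there is at most one (up to an additive constant and sign of g') such radial function v. -/

import Mathlib

noncomputable section

open Real MeasureTheory
open scoped ENNReal

/-- The plane ℝ². -/
abbrev E2 : Type := EuclideanSpace ℝ (Fin 2)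

/-- Partial derivative in the `i`-th coordinate direction. -/
def pd (i : Fin 2) (f : E2 → ℝ) (x : E2) : ℝ :=
  fderiv ℝ f x (EuclideanSpace.single i 1)

/-- Hessian of a scalar function on ℝ². -/
def hess (f : E2 → ℝ) (x : E2) : Fin 2 → Fin 2 → ℝ :=
  fun i j => pd i (pd j f) x

/-- Determinant of the Hessian. -/
def hessDet (f : E2 → ℝ) (x : E2) : ℝ :=
  hess f x 0 0 * hess f x 1 1 - hess f x 0 1 * hess f x 1 0

/-- Squared Frobenius norm of a 2×2 matrix. -/
def frob2 (M : Fin 2 → Fin 2 → ℝ) : ℝ := ∑ i : Fin 2, ∑ j : Fin 2, (M i j) ^ 2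

/-! ### Auxiliary lemmas -/

/-- The Fréchet derivative of the norm on `E2` away from the origin. -/
def ND (x : E2) : E2 →L[ℝ] ℝ :=
  ‖x‖⁻¹ • ((x 0 : ℝ) • (EuclideanSpace.proj (0 : Fin 2) : E2 →L[ℝ] ℝ)
    + (x 1 : ℝ) • (EuclideanSpace.proj (1 : Fin 2) : E2 →L[ℝ] ℝ))

lemma norm_eq2 (y : E2) : ‖y‖ = Real.sqrt (y 0 ^ 2 + y 1 ^ 2) := by
  rw [EuclideanSpace.norm_eq]
  simp [Fin.sum_univ_two, sq_abs]

lemma normsq2 (y : E2) : y 0 ^ 2 + y 1 ^ 2 = ‖y‖ ^ 2 := by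
  rw [norm_eq2, sq_sqrt]; positivity

lemma hasFDerivAt_norm2 {x : E2} (hx : x ≠ 0) :
    HasFDerivAt (fun y : E2 => ‖y‖) (ND x) x := by
  have hxn : (0:ℝ) < ‖x‖ := norm_pos_iff.2 hx
  have hφ : HasFDerivAt (fun y : E2 => y 0 ^ 2 + y 1 ^ 2)
      ((2 * x 0 : ℝ) • (EuclideanSpace.proj (0 : Fin 2) : E2 →L[ℝ] ℝ) +
        (2 * x 1 : ℝ) • (EuclideanSpace.proj (1 : Fin 2) : E2 →L[ℝ] ℝ)) x := by
    have h0 : HasFDerivAt (fun y : E2 => y 0) (EuclideanSpace.proj (0:Fin 2) : E2 →L[ℝ] ℝ) x :=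
      (EuclideanSpace.proj (0:Fin 2) : E2 →L[ℝ] ℝ).hasFDerivAt
    have h1 : HasFDerivAt (fun y : E2 => y 1) (EuclideanSpace.proj (1:Fin 2) : E2 →L[ℝ] ℝ) x :=
      (EuclideanSpace.proj (1:Fin 2) : E2 →L[ℝ] ℝ).hasFDerivAt
    simp only [pow_two]
    refine ((h0.mul h0).add (h1.mul h1)).congr_fderiv ?_
    module
  have hsq : x 0 ^ 2 + x 1 ^ 2 ≠ 0 := by
    rw [normsq2]; positivity
  have hs := (Real.hasDerivAt_sqrt hsq).comp_hasFDerivAt x hφ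
  have hfun : (fun y : E2 => Real.sqrt (y 0 ^ 2 + y 1 ^ 2)) = fun y : E2 => ‖y‖ := by
    funext y; rw [norm_eq2]
  rw [show ((fun x => √x) ∘ fun y : E2 => y 0 ^ 2 + y 1 ^ 2) = fun y : E2 => ‖y‖ from
    hfun ▸ rfl] at hs
  refine hs.congr_fderiv ?_
  symm
  rw [ND]
  ext y
  simp only [ContinuousLinearMap.smul_apply, ContinuousLinearMap.add_apply]
  rw [← norm_eq2]
  field_simp
  ring

lemma ND_apply (x : E2) (i : Fin 2) : ND x (EuclideanSpace.single i 1) = x i / ‖x‖ := by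
  fin_cases i <;>
  · simp [ND, EuclideanSpace.single_apply]
    ring

lemma grad_eq (g : ℝ → ℝ) {y : E2} (hy : y ≠ 0) (hg : DifferentiableAt ℝ g ‖y‖) (j : Fin 2) :
    pd j (fun z : E2 => g ‖z‖) y = deriv g ‖y‖ * (y j * ‖y‖⁻¹) := by
  have h : HasFDerivAt (fun z : E2 => g ‖z‖) (deriv g ‖y‖ • ND y) y :=
    (hg.hasDerivAt).comp_hasFDerivAt y (hasFDerivAt_norm2 hy)
  rw [pd, h.fderiv]
  simp only [ContinuousLinearMap.smul_apply, ND_apply, smul_eq_mul, div_eq_mul_inv]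

lemma hess_formula (g : ℝ → ℝ)
    (hd1 : ∀ s ∈ Set.Ioo (0:ℝ) 1, DifferentiableAt ℝ g s)
    (hd2 : ∀ s ∈ Set.Ioo (0:ℝ) 1, HasDerivAt (deriv g) (deriv (deriv g) s) s)
    {x : E2} (hx : ‖x‖ ∈ Set.Ioo (0:ℝ) 1) (i j : Fin 2) :
    hess (fun y => g ‖y‖) x i j =
      deriv (deriv g) ‖x‖ * (x i * x j / ‖x‖ ^ 2)
      + deriv g ‖x‖ * ((if i = j then 1 else 0) / ‖x‖ - x i * x j / ‖x‖ ^ 3) := by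
  have hx0 : x ≠ 0 := by
    intro h; rw [h] at hx; simp at hx
  have hUopen : IsOpen {y : E2 | ‖y‖ ∈ Set.Ioo (0:ℝ) 1} :=
    isOpen_Ioo.preimage continuous_norm
  have hev : (pd j (fun y : E2 => g ‖y‖)) =ᶠ[nhds x]
      (fun y : E2 => deriv g ‖y‖ * (y j * ‖y‖⁻¹)) := by
    filter_upwards [hUopen.mem_nhds hx] with y hy
    have hy0 : y ≠ 0 := by
      intro h; rw [h] at hy; simp at hy
    exact grad_eq g hy0 (hd1 _ hy) j
  have hnx : ‖x‖ ≠ 0 := ne_of_gt hx.1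
  have ha : HasFDerivAt (fun y : E2 => deriv g ‖y‖)
      ((deriv (deriv g) ‖x‖) • ND x) x :=
    (hd2 _ hx).comp_hasFDerivAt x (hasFDerivAt_norm2 hx0)
  have hproj : HasFDerivAt (fun y : E2 => y j)
      (EuclideanSpace.proj j : E2 →L[ℝ] ℝ) x :=
    (EuclideanSpace.proj j : E2 →L[ℝ] ℝ).hasFDerivAt
  have hinv : HasFDerivAt (fun y : E2 => ‖y‖⁻¹) ((-(‖x‖ ^ 2)⁻¹) • ND x) x :=
    (hasDerivAt_inv hnx).comp_hasFDerivAt x (hasFDerivAt_norm2 hx0)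
  have hb := hproj.mul hinv
  have htot := ha.mul hb
  have hkey : hess (fun y => g ‖y‖) x i j
      = fderiv ℝ (fun y : E2 => deriv g ‖y‖ * (y j * ‖y‖⁻¹)) x (EuclideanSpace.single i 1) := by
    rw [hess, pd, hev.fderiv_eq]
  rw [hkey, (show HasFDerivAt (fun y : E2 => deriv g ‖y‖ * (y j * ‖y‖⁻¹)) _ x from htot).fderiv]
  simp only [ContinuousLinearMap.add_apply, ContinuousLinearMap.smul_apply, ND_apply,
    smul_eq_mul]
  have hps : (EuclideanSpace.proj j : E2 →L[ℝ] ℝ) (EuclideanSpace.single i 1)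
      = if i = j then 1 else 0 := by
    simp [EuclideanSpace.single_apply]
    by_cases h : i = j <;> simp [h, eq_comm]
  rw [hps]
  by_cases h : i = j <;> simp [h] <;> field_simp <;> ring

lemma hessDet_radial (g : ℝ → ℝ)
    (hd1 : ∀ s ∈ Set.Ioo (0:ℝ) 1, DifferentiableAt ℝ g s)
    (hd2 : ∀ s ∈ Set.Ioo (0:ℝ) 1, HasDerivAt (deriv g) (deriv (deriv g) s) s)
    {x : E2} (hx : ‖x‖ ∈ Set.Ioo (0:ℝ) 1) :
    hessDet (fun y => g ‖y‖) x = deriv (deriv g) ‖x‖ * deriv g ‖x‖ / ‖x‖ := by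
  have hr : ‖x‖ ≠ 0 := ne_of_gt hx.1
  have e := normsq2 x
  rw [hessDet, hess_formula g hd1 hd2 hx 0 0, hess_formula g hd1 hd2 hx 1 1,
    hess_formula g hd1 hd2 hx 0 1, hess_formula g hd1 hd2 hx 1 0]
  norm_num
  set A := deriv (deriv g) ‖x‖
  set B := deriv g ‖x‖
  set a := x 0
  set b := x 1
  set r := ‖x‖
  field_simp
  linear_combination (A*B*r^3 - B^2*r^2) * e

lemma frob2_radial (g : ℝ → ℝ)
    (hd1 : ∀ s ∈ Set.Ioo (0:ℝ) 1, DifferentiableAt ℝ g s)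
    (hd2 : ∀ s ∈ Set.Ioo (0:ℝ) 1, HasDerivAt (deriv g) (deriv (deriv g) s) s)
    {x : E2} (hx : ‖x‖ ∈ Set.Ioo (0:ℝ) 1) :
    frob2 (hess (fun y => g ‖y‖) x)
      = (deriv (deriv g) ‖x‖) ^ 2 + (deriv g ‖x‖ / ‖x‖) ^ 2 := by
  have hr : ‖x‖ ≠ 0 := ne_of_gt hx.1
  have e := normsq2 x
  rw [frob2, Fin.sum_univ_two, Fin.sum_univ_two, Fin.sum_univ_two,
    hess_formula g hd1 hd2 hx 0 0, hess_formula g hd1 hd2 hx 1 1,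
    hess_formula g hd1 hd2 hx 0 1, hess_formula g hd1 hd2 hx 1 0]
  norm_num
  set A := deriv (deriv g) ‖x‖
  set B := deriv g ‖x‖
  set a := x 0
  set b := x 1
  set r := ‖x‖
  field_simp
  linear_combination (-2*A*B*r*(a^2+b^2) + A^2*r^2*(a^2+b^2+r^2) + B^2*(a^2+b^2-r^2)) * e

lemma not_integrable_inv_sq {δ : ℝ} (hδ : 0 < δ) {K : ℝ} (hK : 0 < K)
    {h : E2 → ℝ} (hint : IntegrableOn h (Metric.ball (0:E2) δ \ {0}))
    (hbd : ∀ x ∈ Metric.ball (0:E2) δ \ {0}, K / ‖x‖ ^ 2 ≤ h x) : False := by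
  set S := Metric.ball (0:E2) δ \ {0} with hS
  set μB := volume (Metric.ball (0:E2) 1) with hμB
  have hμB0 : μB ≠ 0 := (Metric.measure_ball_pos volume 0 one_pos).ne'
  have hμBt : μB ≠ ⊤ := measure_ball_lt_top.ne
  set q : ℝ := (2:ℝ)⁻¹ with hqdef
  have hq0 : 0 < q := by norm_num
  have hq1 : q < 1 := by norm_num
  set d : ℕ → ℝ := fun n => δ * q ^ n with hddef
  have hd0 : ∀ n, 0 < d n := fun n => by positivity
  have hdlt : ∀ n, d (n+1) < d n := by
    intro n
    apply mul_lt_mul_of_pos_left _ hδ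
    exact pow_lt_pow_right_of_lt_one₀ hq0 hq1 (by omega)
  have hdle : ∀ n, d n ≤ δ := by
    intro n
    calc d n ≤ δ * 1 := by
          apply mul_le_mul_of_nonneg_left _ hδ.le
          exact pow_le_one₀ hq0.le hq1.le
      _ = δ := mul_one δ
  set A : ℕ → Set E2 := fun n => Metric.ball 0 (d n) \ Metric.ball 0 (d (n+1)) with hA
  have hAS : ∀ n, A n ⊆ S := by
    intro n x hx
    constructor
    · exact Metric.ball_subset_ball (hdle n) hx.1
    · simp only [Set.mem_singleton_iff]
      intro h0
      exact hx.2 (by simp [h0, Metric.mem_ball, hd0 (n+1)])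
  have hAm : ∀ n, MeasurableSet (A n) :=
    fun n => measurableSet_ball.diff measurableSet_ball
  have hnorm_mem : ∀ n x, x ∈ A n → d (n+1) ≤ ‖x‖ ∧ ‖x‖ < d n := by
    intro n x hx
    constructor
    · by_contra hc
      exact hx.2 (by simpa [Metric.mem_ball, dist_zero_right] using not_le.1 hc)
    · simpa [Metric.mem_ball, dist_zero_right] using hx.1
  have hdmono : ∀ m n, m ≤ n → d n ≤ d m := by
    intro m n hmn
    apply mul_le_mul_of_nonneg_left _ hδ.le
    exact pow_le_pow_of_le_one hq0.le hq1.le hmn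
  have hdisj : Set.univ.PairwiseDisjoint A := by
    intro m _ n _ hmn
    rcases lt_or_gt_of_ne hmn with hlt | hlt
    · apply Set.disjoint_left.2
      intro x hxm hxn
      have h1 := (hnorm_mem m x hxm).1
      have h2 := (hnorm_mem n x hxn).2
      have := hdmono (m+1) n hlt
      linarith
    · apply Set.disjoint_left.2
      intro x hxm hxn
      have h1 := (hnorm_mem n x hxn).1
      have h2 := (hnorm_mem m x hxm).2
      have := hdmono (n+1) m hlt
      linarith
  have hvol : ∀ n, volume (A n)
      = (ENNReal.ofReal ((d n) ^ 2) - ENNReal.ofReal ((d (n+1)) ^ 2)) * μB := by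
    intro n
    rw [hA]
    rw [measure_diff (Metric.ball_subset_ball (hdlt n).le)
      measurableSet_ball.nullMeasurableSet measure_ball_lt_top.ne]
    rw [Measure.addHaar_ball volume 0 (hd0 n).le, Measure.addHaar_ball volume 0 (hd0 (n+1)).le,
      finrank_euclideanSpace_fin, ENNReal.sub_mul (fun _ _ => hμBt)]
  set K' : ℝ≥0∞ := ENNReal.ofReal (3/4 * K) * μB with hK'
  have hK'0 : K' ≠ 0 := by
    apply mul_ne_zero _ hμB0
    simp only [ne_eq, ENNReal.ofReal_eq_zero, not_le]
    positivity
  have hK't : K' ≠ ⊤ := ENNReal.mul_ne_top ENNReal.ofReal_ne_top hμBt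
  have hann : ∀ n, K' ≤ ∫⁻ x in A n, ENNReal.ofReal (h x) := by
    intro n
    have hconst : K' = ENNReal.ofReal (K / (d n) ^ 2) * volume (A n) := by
      rw [hvol n]
      have h1 : (d (n+1)) ^ 2 = (d n) ^ 2 / 4 := by
        rw [hddef]; simp only [pow_succ]
        field_simp
        ring
      rw [h1, ← ENNReal.ofReal_sub _ (by positivity),
        show (d n) ^ 2 - (d n) ^ 2 / 4 = 3 / 4 * (d n) ^ 2 by ring, ← mul_assoc,
        ← ENNReal.ofReal_mul (by positivity),
        show K / (d n) ^ 2 * (3 / 4 * (d n) ^ 2) = 3 / 4 * K by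
          have := (hd0 n).ne'; field_simp]
    rw [hconst, ← setLIntegral_const]
    apply setLIntegral_mono_ae
    · have h1 : AEMeasurable h (volume.restrict S) := hint.aemeasurable
      exact (h1.mono_measure (Measure.restrict_mono (hAS n) le_rfl)).ennreal_ofReal
    · apply ae_of_all
      intro x hx
      apply ENNReal.ofReal_le_ofReal
      have hxS := hAS n hx
      have hxn := hnorm_mem n x hx
      have hxpos : 0 < ‖x‖ := lt_of_lt_of_le (hd0 (n+1)) hxn.1
      calc K / (d n) ^ 2 ≤ K / ‖x‖ ^ 2 := by
            apply div_le_div_of_nonneg_left hK.le (by positivity)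
            exact pow_le_pow_left₀ hxpos.le hxn.2.le 2
        _ ≤ h x := hbd x hxS
  have hfin : ∫⁻ x in S, ENNReal.ofReal (h x) < ⊤ := hint.setLIntegral_lt_top
  have hsum : ∀ N : ℕ, (N : ℝ≥0∞) * K' ≤ ∫⁻ x in S, ENNReal.ofReal (h x) := by
    intro N
    have hunion : ∫⁻ x in ⋃ n ∈ Finset.range N, A n, ENNReal.ofReal (h x)
        = ∑ n ∈ Finset.range N, ∫⁻ x in A n, ENNReal.ofReal (h x) :=
      lintegral_biUnion_finset (hdisj.subset (Set.subset_univ _)) (fun n _ => hAm n) _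
    calc (N : ℝ≥0∞) * K' = ∑ _n ∈ Finset.range N, K' := by
          rw [Finset.sum_const, Finset.card_range, nsmul_eq_mul]
      _ ≤ ∑ n ∈ Finset.range N, ∫⁻ x in A n, ENNReal.ofReal (h x) :=
          Finset.sum_le_sum (fun n _ => hann n)
      _ = ∫⁻ x in ⋃ n ∈ Finset.range N, A n, ENNReal.ofReal (h x) := hunion.symm
      _ ≤ ∫⁻ x in S, ENNReal.ofReal (h x) := by
          apply lintegral_mono_set
          exact Set.iUnion₂_subset (fun n _ => hAS n)
  obtain ⟨N, hN⟩ := ENNReal.exists_nat_gt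
    (ENNReal.div_lt_top hfin.ne hK'0).ne
  have hle := hsum N
  rw [← ENNReal.le_div_iff_mul_le (Or.inl hK'0) (Or.inl hK't)] at hle
  exact absurd hN (not_lt.2 hle)

theorem stmt11 (f : ℝ → ℝ) (hfm : Measurable f)
    (hfint : IntegrableOn (fun s => s * |f s|) (Set.Ioo 0 1))
    (g : ℝ → ℝ)
    (hg1 : ContDiffOn ℝ 1 g (Set.Ico 0 1))
    (hg2 : ContDiffOn ℝ 2 g (Set.Ioo 0 1))
    (hdet : ∀ x ∈ Metric.ball (0 : E2) 1 \ {0}, hessDet (fun y => g ‖y‖) x = f ‖x‖)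
    (hE : IntegrableOn (fun x => frob2 (hess (fun y => g ‖y‖) x))
      (Metric.ball (0 : E2) 1 \ {0})) :
    ∀ r ∈ Set.Ioo (0 : ℝ) 1, (deriv g r) ^ 2 = ∫ s in Set.Ioo (0 : ℝ) r, 2 * s * f s := by
  -- basic differentiability facts
  have hd1 : ∀ s ∈ Set.Ioo (0:ℝ) 1, DifferentiableAt ℝ g s := by
    intro s hs
    exact ((hg2.differentiableOn (by norm_num)) s hs).differentiableAt
      (isOpen_Ioo.mem_nhds hs)
  have hg2' : ContDiffOn ℝ 1 (deriv g) (Set.Ioo 0 1) :=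
    hg2.deriv_of_isOpen isOpen_Ioo (by norm_num)
  have hd2 : ∀ s ∈ Set.Ioo (0:ℝ) 1, HasDerivAt (deriv g) (deriv (deriv g) s) s := by
    intro s hs
    exact (((hg2'.differentiableOn (by norm_num)) s hs).differentiableAt
      (isOpen_Ioo.mem_nhds hs)).hasDerivAt
  -- the ODE satisfied by g
  have hODE : ∀ s ∈ Set.Ioo (0:ℝ) 1, deriv (deriv g) s * deriv g s = s * f s := by
    intro s hs
    set x : E2 := EuclideanSpace.single (0 : Fin 2) s with hxdef
    have hxn : ‖x‖ = s := by
      rw [hxdef, EuclideanSpace.norm_single, Real.norm_eq_abs, abs_of_pos hs.1]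
    have hxmem : x ∈ Metric.ball (0 : E2) 1 \ {0} := by
      constructor
      · simpa [Metric.mem_ball, dist_zero_right, hxn] using hs.2
      · simp only [Set.mem_singleton_iff]
        intro h
        rw [h] at hxn; simp at hxn; exact absurd hxn.symm (ne_of_gt hs.1)
    have hd := hdet x hxmem
    rw [hessDet_radial g hd1 hd2 (by rw [hxn]; exact hs)] at hd
    rw [hxn] at hd
    have hs0 : s ≠ 0 := ne_of_gt hs.1
    field_simp at hd
    rw [hd]
  -- integrability of the source term
  have hint : IntegrableOn (fun s => 2 * s * f s) (Set.Ioo (0:ℝ) 1) := by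
    apply Integrable.mono' (hfint.const_mul 2)
    · exact ((measurable_const.mul measurable_id).mul hfm).aestronglyMeasurable
    · filter_upwards [ae_restrict_mem measurableSet_Ioo] with s hs
      rw [Real.norm_eq_abs, abs_mul, abs_mul, abs_of_nonneg (by norm_num : (0:ℝ) ≤ 2),
        abs_of_nonneg hs.1.le]
      ring_nf
      exact le_refl _
  -- fundamental theorem of calculus on compact subintervals
  have key : ∀ ε r : ℝ, 0 < ε → ε ≤ r → r < 1 →
      (deriv g r) ^ 2 - (deriv g ε) ^ 2 = ∫ s in Set.Ioo ε r, 2 * s * f s := by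
    intro ε r hε hεr hr
    have hderiv : ∀ t ∈ Set.uIcc ε r, HasDerivAt (fun s => (deriv g s) ^ 2) (2 * t * f t) t := by
      intro t ht
      rw [Set.uIcc_of_le hεr] at ht
      have ht' : t ∈ Set.Ioo (0:ℝ) 1 := ⟨lt_of_lt_of_le hε ht.1, lt_of_le_of_lt ht.2 hr⟩
      have h2 := (hd2 t ht').pow 2
      refine h2.congr_deriv ?_
      have := hODE t ht'
      push_cast
      nlinarith [hODE t ht']
    have hii : IntervalIntegrable (fun s => 2 * s * f s) volume ε r := by
      rw [intervalIntegrable_iff_integrableOn_Ioc_of_le hεr]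
      exact hint.mono_set (fun t ht => ⟨lt_trans hε ht.1, lt_of_le_of_lt ht.2 hr⟩)
    have := intervalIntegral.integral_eq_sub_of_hasDerivAt hderiv hii
    rw [← this, intervalIntegral.integral_of_le hεr, integral_Ioc_eq_integral_Ioo]
  -- the boundary value of the derivative at 0
  set c : ℝ := derivWithin g (Set.Ico 0 1) 0 with hcdef
  have hcont : ContinuousOn (derivWithin g (Set.Ico 0 1)) (Set.Ico 0 1) :=
    hg1.continuousOn_derivWithin (uniqueDiffOn_Ico 0 1) le_rfl
  have hctend : Filter.Tendsto (deriv g) (nhdsWithin 0 (Set.Ioo (0:ℝ) 1)) (nhds c) := by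
    have h1 : Filter.Tendsto (derivWithin g (Set.Ico 0 1))
        (nhdsWithin 0 (Set.Ico (0:ℝ) 1)) (nhds c) :=
      hcont 0 ⟨le_refl 0, by norm_num⟩
    have h2 : Filter.Tendsto (derivWithin g (Set.Ico 0 1))
        (nhdsWithin 0 (Set.Ioo (0:ℝ) 1)) (nhds c) :=
      h1.mono_left (nhdsWithin_mono 0 Set.Ioo_subset_Ico_self)
    apply h2.congr'
    filter_upwards [self_mem_nhdsWithin] with s hs
    exact derivWithin_of_mem_nhds (Filter.mem_of_superset (isOpen_Ioo.mem_nhds hs)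
      Set.Ioo_subset_Ico_self)
  -- main identity with constant c
  have main : ∀ r ∈ Set.Ioo (0:ℝ) 1,
      (deriv g r) ^ 2 = c ^ 2 + ∫ s in Set.Ioo (0:ℝ) r, 2 * s * f s := by
    intro r hr
    set a : ℕ → ℝ := fun n => r / (n + 2) with hadef
    have ha_pos : ∀ n, 0 < a n := fun n => div_pos hr.1 (by positivity)
    have ha_lt : ∀ n, a n < r := by
      intro n
      apply div_lt_self hr.1
      have : (0:ℝ) ≤ (n:ℝ) := Nat.cast_nonneg n
      linarith
    have ha_anti : ∀ m n : ℕ, m ≤ n → a n ≤ a m := by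
      intro m n hmn
      apply div_le_div_of_nonneg_left hr.1.le (by positivity)
      have : (m:ℝ) ≤ (n:ℝ) := Nat.cast_le.2 hmn
      linarith
    have ha_tend : Filter.Tendsto a Filter.atTop (nhds 0) := by
      have h1 : Filter.Tendsto (fun n : ℕ => (n:ℝ) + 2) Filter.atTop Filter.atTop :=
        Filter.tendsto_atTop_add_const_right _ 2 tendsto_natCast_atTop_atTop
      exact Filter.Tendsto.div_atTop tendsto_const_nhds h1
    have hseq1 : Filter.Tendsto (fun n => deriv g (a n)) Filter.atTop (nhds c) := by
      apply hctend.comp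
      rw [tendsto_nhdsWithin_iff]
      exact ⟨ha_tend, Filter.Eventually.of_forall
        (fun n => ⟨ha_pos n, (ha_lt n).trans hr.2⟩)⟩
    set S : ℕ → Set ℝ := fun n => Set.Ioo (a n) r with hSdef
    have hU : (⋃ n, S n) = Set.Ioo 0 r := by
      ext t
      simp only [Set.mem_iUnion, Set.mem_Ioo, hSdef]
      constructor
      · rintro ⟨n, h1, h2⟩
        exact ⟨(ha_pos n).trans h1, h2⟩
      · rintro ⟨h1, h2⟩
        obtain ⟨n, hn⟩ := (ha_tend.eventually_lt_const h1).exists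
        exact ⟨n, hn, h2⟩
    have htE : Filter.Tendsto (fun n => ∫ s in S n, 2 * s * f s) Filter.atTop
        (nhds (∫ s in Set.Ioo (0:ℝ) r, 2 * s * f s)) := by
      have := tendsto_setIntegral_of_monotone (f := fun s => 2 * s * f s) (μ := volume)
        (fun n => measurableSet_Ioo)
        (fun m n hmn => Set.Ioo_subset_Ioo (ha_anti m n hmn) le_rfl)
        (by rw [hU]
            exact hint.mono_set (Set.Ioo_subset_Ioo le_rfl hr.2.le))
      rwa [hU] at this
    have htE2 : Filter.Tendsto (fun n => ∫ s in S n, 2 * s * f s) Filter.atTop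
        (nhds ((deriv g r) ^ 2 - c ^ 2)) := by
      have heq : ∀ n, ∫ s in S n, 2 * s * f s = (deriv g r) ^ 2 - (deriv g (a n)) ^ 2 :=
        fun n => (key (a n) r (ha_pos n) (ha_lt n).le hr.2).symm
      simp only [heq]
      exact (tendsto_const_nhds).sub ((hseq1.pow 2))
    have := tendsto_nhds_unique htE htE2
    linarith [this]
  -- c = 0
  have hc0 : c = 0 := by
    by_contra hc
    have habs : 0 < |c| := abs_pos.2 hc
    have hev : ∀ᶠ s in nhdsWithin 0 (Set.Ioo (0:ℝ) 1), |c| / 2 ≤ |deriv g s| := by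
      apply (hctend.abs).eventually
      exact eventually_ge_nhds (by linarith)
    rw [Filter.eventually_iff, Metric.mem_nhdsWithin_iff] at hev
    obtain ⟨ε, hε, hev⟩ := hev
    set δ : ℝ := min ε 1 with hδdef
    have hδ0 : 0 < δ := lt_min hε one_pos
    have hδ1 : δ ≤ 1 := min_le_right _ _
    apply not_integrable_inv_sq hδ0 (show (0:ℝ) < c^2/4 by positivity)
      (h := fun x => frob2 (hess (fun y => g ‖y‖) x))
    · apply hE.mono_set
      intro x hx
      exact ⟨Metric.ball_subset_ball hδ1 hx.1, hx.2⟩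
    · intro x hx
      have hx0 : x ≠ 0 := fun h0 => hx.2 (by simp [h0])
      have hxn : 0 < ‖x‖ := norm_pos_iff.2 hx0
      have hxδ : ‖x‖ < δ := by
        simpa [Metric.mem_ball, dist_zero_right] using hx.1
      have hxI : ‖x‖ ∈ Set.Ioo (0:ℝ) 1 := ⟨hxn, lt_of_lt_of_le hxδ hδ1⟩
      have hbig : |c| / 2 ≤ |deriv g ‖x‖| := by
        apply hev
        constructor
        · simp only [Metric.mem_ball, Real.dist_eq, sub_zero]
          rw [abs_of_pos hxn]
          exact lt_of_lt_of_le hxδ (min_le_left _ _)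
        · exact hxI
      rw [frob2_radial g hd1 hd2 hxI]
      have h1 : c ^ 2 / 4 ≤ (deriv g ‖x‖) ^ 2 := by
        have := pow_le_pow_left₀ (by positivity) hbig 2
        rw [sq_abs] at this
        calc c ^ 2 / 4 = (|c| / 2) ^ 2 := by rw [div_pow, sq_abs]; norm_num
          _ ≤ _ := this
      calc c ^ 2 / 4 / ‖x‖ ^ 2 ≤ (deriv g ‖x‖) ^ 2 / ‖x‖ ^ 2 := by
            gcongr
        _ = (deriv g ‖x‖ / ‖x‖) ^ 2 := by rw [div_pow]
        _ ≤ (deriv (deriv g) ‖x‖) ^ 2 + (deriv g ‖x‖ / ‖x‖) ^ 2 :=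
            le_add_of_nonneg_left (sq_nonneg _)
  intro r hr
  rw [main r hr, hc0]
  norm_num
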